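/- Let ω = ℝ^ℕ carry the product topology and let (T_t)_{t≥0} be a strongly continuous semigroup of continuous linear operators on ω. Then the generator of T is everywhere defined: for every x ∈ ω the limit lim_{h→0⁺} (T_ह x − x)/h = lim_{h→0⁺} h⁻¹ • (T_h x − x) exists in ω. -/

import Mathlib

open Filter Topology Set

private def ee (k : ℕ) : ℕ → ℝ := Pi.single k 1

private lemma ee_apply (k m : ℕ) : ee k m = if m = k then 1 else 0 := Pi.single_apply k 1 m

private lemma ee_same (k : ℕ) : ee k k = 1 := Pi.single_eq_same k 1

private def gg (T : ℝ → (ℕ → ℝ) →L[ℝ] (ℕ → ℝ)) (j k : ℕ) (u : ℝ) : ℝ :=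
  T (max u 0) (ee j) k

private noncomputable def GG (T : ℝ → (ℕ → ℝ) →L[ℝ] (ℕ → ℝ)) (j k : ℕ) (r : ℝ) : ℝ :=
  ∫ u in (0:ℝ)..r, gg T j k u

private noncomputable def cc (T : ℝ → (ℕ → ℝ) →L[ℝ] (ℕ → ℝ)) (n k : ℕ) (h : ℝ) : ℝ :=
  h⁻¹ * (T h (ee k) n - ee k n)

private lemma slope_integral_right (g : ℝ → ℝ) (hg : Continuous g) (r : ℝ) :
    Tendsto (fun h : ℝ => h⁻¹ * ((∫ u in (0:ℝ)..(r + h), g u) - ∫ u in (0:ℝ)..r, g u))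
      (𝓝[>] 0) (𝓝 (g r)) := by
  have hD : HasDerivAt (fun v : ℝ => ∫ u in (0:ℝ)..v, g u) (g r) r :=
    intervalIntegral.integral_hasDerivAt_right (hg.intervalIntegrable _ _)
      hg.stronglyMeasurable.stronglyMeasurableAtFilter hg.continuousAt
  have hs := hasDerivAt_iff_tendsto_slope.mp hD
  have hmap : Tendsto (fun h : ℝ => r + h) (𝓝[>] (0:ℝ)) (𝓝[≠] r) := by
    refine tendsto_nhdsWithin_of_tendsto_nhds_of_eventually_within _ ?_ ?_
    · have h1 : Tendsto (fun h : ℝ => r + h) (𝓝 (0:ℝ)) (𝓝 r) := by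
        have h2 := (tendsto_const_nhds (α := ℝ) (x := r) (f := 𝓝 (0:ℝ))).add tendsto_id
        simpa using h2
      exact h1.mono_left nhdsWithin_le_nhds
    · filter_upwards [self_mem_nhdsWithin] with h hh
      have h0 : (0:ℝ) < h := hh
      simp only [mem_compl_iff, mem_singleton_iff]
      exact fun e => h0.ne' (by linarith)
  refine (hs.comp hmap).congr' ?_
  filter_upwards [self_mem_nhdsWithin] with h _
  simp only [Function.comp_apply]
  rw [slope_def_field]
  ring

private lemma avg_integral_tendsto (g : ℝ → ℝ) (hg : Continuous g) :
    Tendsto (fun r : ℝ => r⁻¹ * ∫ u in (0:ℝ)..r, g u) (𝓝[>] 0) (𝓝 (g 0)) := by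
  have h1 := slope_integral_right g hg 0
  exact h1.congr fun h => by rw [zero_add, intervalIntegral.integral_same, sub_zero]

private lemma coord
    (T : ℝ → (ℕ → ℝ) →L[ℝ] (ℕ → ℝ))
    (hT0 : T 0 = ContinuousLinearMap.id ℝ (ℕ → ℝ))
    (hTadd : ∀ s t : ℝ, 0 ≤ s → 0 ≤ t → T (s + t) = (T s).comp (T t))
    (horbit : ∀ x : ℕ → ℝ, ContinuousOn (fun t : ℝ => T t x) (Set.Ici 0))
    (x : ℕ → ℝ) (n : ℕ) :
    ∃ L : ℝ, Tendsto (fun h : ℝ => h⁻¹ * (T h x n - x n)) (𝓝[>] 0) (𝓝 L) := by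
  classical
  -- continuity of truncated orbits, coordinatewise
  have cont1 : ∀ (v : ℕ → ℝ) (m : ℕ), Continuous fun u : ℝ => T (max u 0) v m := by
    intro v m
    have h1 : Continuous fun u : ℝ => T (max u 0) v :=
      (horbit v).comp_continuous (continuous_id.max continuous_const)
        (fun u => mem_Ici.mpr (le_max_right u 0))
    exact (continuous_apply m).comp h1
  -- Step 1 : Baire category argument, uniform finite dependence on [0,1]
  obtain ⟨s, hns, hvan⟩ : ∃ s : Finset ℕ, n ∈ s ∧
      ∀ t ∈ Icc (0:ℝ) 1, ∀ z : ℕ → ℝ, (∀ k ∈ s, z k = 0) → T t z n = 0 := by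
    have hCc : ∀ m : ℕ, IsClosed {y : ℕ → ℝ | ∀ t ∈ Icc (0:ℝ) 1, |T t y n| ≤ (m:ℝ)} := by
      intro m
      have heq : {y : ℕ → ℝ | ∀ t ∈ Icc (0:ℝ) 1, |T t y n| ≤ (m:ℝ)}
          = ⋂ t ∈ Icc (0:ℝ) 1, {y : ℕ → ℝ | |T t y n| ≤ (m:ℝ)} := by
        ext y; simp only [mem_setOf_eq, mem_iInter]
      rw [heq]
      refine isClosed_biInter fun t _ => ?_
      have hco : Continuous fun y : ℕ → ℝ => T t y n := (continuous_apply n).comp (T t).continuous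
      exact isClosed_le hco.abs continuous_const
    have hCu : (⋃ m : ℕ, {y : ℕ → ℝ | ∀ t ∈ Icc (0:ℝ) 1, |T t y n| ≤ (m:ℝ)}) = univ := by
      refine eq_univ_of_forall fun y => ?_
      have hcont : Continuous fun u : ℝ => |T (max u 0) y n| := (cont1 y n).abs
      obtain ⟨t₀, _, ht₀⟩ := isCompact_Icc.exists_isMaxOn (nonempty_Icc.mpr zero_le_one)
        hcont.continuousOn
      refine mem_iUnion.mpr ⟨⌈|T (max t₀ 0) y n|⌉₊, fun t ht => ?_⟩
      have he : T t y n = T (max t 0) y n := by rw [max_eq_left ht.1]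
      rw [he]
      exact (ht₀ ht).trans (Nat.le_ceil _)
    obtain ⟨m, hm⟩ := nonempty_interior_of_iUnion_of_closed hCc hCu
    obtain ⟨x₀, hx₀⟩ := hm
    have hnb : {y : ℕ → ℝ | ∀ t ∈ Icc (0:ℝ) 1, |T t y n| ≤ (m:ℝ)} ∈ 𝓝 x₀ :=
      mem_interior_iff_mem_nhds.mp hx₀
    rw [nhds_pi] at hnb
    obtain ⟨I, hIfin, U, hU, hUsub⟩ := Filter.mem_pi.mp hnb
    refine ⟨insert n hIfin.toFinset, Finset.mem_insert_self _ _, ?_⟩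
    intro t ht z hz
    have hz' : ∀ k ∈ I, z k = 0 := fun k hk =>
      hz k (Finset.mem_insert_of_mem (hIfin.mem_toFinset.mpr hk))
    have key : ∀ c : ℝ, |T t (x₀ + c • z) n| ≤ (m:ℝ) := by
      intro c
      have hmem : x₀ + c • z ∈ I.pi U := by
        intro i hi
        have hxi : (x₀ + c • z) i = x₀ i := by simp [hz' i hi]
        rw [hxi]
        exact mem_of_mem_nhds (hU i)
      exact (hUsub hmem) t ht
    by_contra habs
    have hv : 0 < |T t z n| := abs_pos.mpr habs
    set c : ℝ := (2 * (m:ℝ) + 1) / |T t z n| with hc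
    have hc0 : 0 ≤ c := div_nonneg (by positivity) hv.le
    have h1 : T t (x₀ + c • z) n = T t x₀ n + c * T t z n := by
      rw [map_add, map_smul]; simp
    have e1 := key c
    have e0 : |T t x₀ n| ≤ (m:ℝ) := by simpa using key 0
    have tri : |c * T t z n| ≤ |T t (x₀ + c • z) n| + |T t x₀ n| := by
      have h2 : c * T t z n = T t (x₀ + c • z) n + -(T t x₀ n) := by rw [h1]; ring
      rw [h2]
      calc |T t (x₀ + c • z) n + -(T t x₀ n)|
          ≤ |T t (x₀ + c • z) n| + |-(T t x₀ n)| := abs_add_le _ _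
        _ = |T t (x₀ + c • z) n| + |T t x₀ n| := by rw [abs_neg]
    have h3 : |c * T t z n| = 2 * (m:ℝ) + 1 := by
      rw [abs_mul, abs_of_nonneg hc0, hc, div_mul_cancel₀ _ hv.ne']
    linarith
  -- Step 2 : representation of the n-th coordinate on [0,1]
  have hrep : ∀ t ∈ Icc (0:ℝ) 1, ∀ y : ℕ → ℝ,
      T t y n = ∑ k ∈ s.attach, y k.1 * T t (ee k.1) n := by
    intro t ht y
    have hsum : ∀ k ∈ s, (∑ j ∈ s.attach, y j.1 • ee j.1) k = y k := by
      intro k hk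
      rw [Finset.sum_apply]
      rw [Finset.sum_eq_single (⟨k, hk⟩ : {a // a ∈ s})]
      · simp [ee_same]
      · intro b _ hbk
        have hne : k ≠ b.1 := fun e => hbk (Subtype.ext e.symm)
        simp [ee_apply, hne]
      · intro hmem; exact absurd (Finset.mem_attach _ _) hmem
    have hz : T t (y - ∑ j ∈ s.attach, y j.1 • ee j.1) n = 0 := by
      apply hvan t ht
      intro k hk
      simp only [Pi.sub_apply]
      rw [hsum k hk, sub_self]
    have hsplit : y = (y - ∑ j ∈ s.attach, y j.1 • ee j.1)
        + ∑ j ∈ s.attach, y j.1 • ee j.1 := by abel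
    calc T t y n
        = T t ((y - ∑ j ∈ s.attach, y j.1 • ee j.1)
            + ∑ j ∈ s.attach, y j.1 • ee j.1) n := by rw [← hsplit]
      _ = T t (y - ∑ j ∈ s.attach, y j.1 • ee j.1) n
            + T t (∑ j ∈ s.attach, y j.1 • ee j.1) n := by
          rw [map_add, Pi.add_apply]
      _ = T t (∑ j ∈ s.attach, y j.1 • ee j.1) n := by rw [hz, zero_add]
      _ = ∑ k ∈ s.attach, y k.1 * T t (ee k.1) n := by
          rw [map_sum, Finset.sum_apply]
          refine Finset.sum_congr rfl fun j _ => ?_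
          rw [map_smul]
          simp
  have ggcont : ∀ (j : ↥s) (k : ℕ), Continuous (gg T ↑j k) := fun j k =>
    cont1 (ee ↑j) k
  -- Step 3 : the key integral identity
  have hkey : ∀ (j : ↥s), ∀ r ∈ Icc (0:ℝ) 1, ∀ h ∈ Ioc (0:ℝ) 1,
      (∑ k ∈ s.attach, cc T n ↑k h * GG T ↑j ↑k r)
        = h⁻¹ * (GG T ↑j n (r + h) - GG T ↑j n r) - h⁻¹ * (GG T ↑j n h - GG T ↑j n 0) := by
    intro j r hr h hh
    have intg : ∀ (k : ℕ) (a b : ℝ), IntervalIntegrable (gg T ↑j k) MeasureTheory.volume a b :=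
      fun k a b => (ggcont j k).intervalIntegrable a b
    have hadd : GG T ↑j n h + (∫ u in h..(r+h), gg T ↑j n u) = GG T ↑j n (r + h) := by
      simp only [GG]
      exact intervalIntegral.integral_add_adjacent_intervals (intg n 0 h) (intg n h (r+h))
    have hshift : (∫ u in h..(r+h), gg T ↑j n u) = ∫ u in (0:ℝ)..r, gg T ↑j n (u + h) := by
      rw [intervalIntegral.integral_comp_add_right (gg T ↑j n) h, zero_add]
    have hcong : (∫ u in (0:ℝ)..r, gg T ↑j n (u + h))
        = ∫ u in (0:ℝ)..r, (∑ k ∈ s.attach, T h (ee (↑k : ℕ)) n * gg T ↑j ↑k u) := by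
      apply intervalIntegral.integral_congr
      intro u hu
      rw [Set.uIcc_of_le hr.1] at hu
      have hu0 : 0 ≤ u := hu.1
      have h0 : 0 < h := hh.1
      have m1 : max (u + h) 0 = u + h := max_eq_left (by linarith)
      have m2 : max u 0 = u := max_eq_left hu0
      simp only [gg, m1, m2]
      rw [add_comm u h, hTadd h u h0.le hu0, ContinuousLinearMap.comp_apply,
        hrep h ⟨h0.le, hh.2⟩ (T u (ee ↑j))]
      exact Finset.sum_congr rfl fun k _ => mul_comm _ _
    have hsum2 : (∫ u in (0:ℝ)..r, ∑ k ∈ s.attach, T h (ee (↑k : ℕ)) n * gg T ↑j ↑k u)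
        = ∑ k ∈ s.attach, T h (ee (↑k : ℕ)) n * GG T ↑j ↑k r := by
      have hck : ∀ k : ↥s, Continuous fun u : ℝ => T h (ee (↑k : ℕ)) n * gg T ↑j ↑k u :=
        fun k => continuous_const.mul (ggcont j ↑k)
      rw [intervalIntegral.integral_finset_sum (fun k _ => (hck k).intervalIntegrable 0 r)]
      exact Finset.sum_congr rfl fun k _ => intervalIntegral.integral_const_mul _ _
    have hX : (∫ u in h..(r+h), gg T ↑j n u)
        = ∑ k ∈ s.attach, T h (ee (↑k : ℕ)) n * GG T ↑j ↑k r :=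
      hshift.trans (hcong.trans hsum2)
    have hA : GG T ↑j n (r + h) - GG T ↑j n h
        = ∑ k ∈ s.attach, T h (ee (↑k : ℕ)) n * GG T ↑j ↑k r := by
      rw [← hX]; linarith
    have hB : ∑ k ∈ s.attach, ee (↑k : ℕ) n * GG T ↑j ↑k r = GG T ↑j n r := by
      rw [Finset.sum_eq_single (⟨n, hns⟩ : ↥s)]
      · simp [ee_same]
      · intro b _ hb
        have hne : n ≠ (b:ℕ) := fun e => hb (Subtype.ext e.symm)
        simp [ee_apply, hne]
      · intro hmem; exact absurd (Finset.mem_attach _ _) hmem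
    have hsplit : ∑ k ∈ s.attach, cc T n ↑k h * GG T ↑j ↑k r
        = h⁻¹ * ((∑ k ∈ s.attach, T h (ee (↑k : ℕ)) n * GG T ↑j ↑k r)
            - ∑ k ∈ s.attach, ee (↑k : ℕ) n * GG T ↑j ↑k r) := by
      rw [← Finset.sum_sub_distrib, Finset.mul_sum]
      exact Finset.sum_congr rfl fun k _ => by simp only [cc]; ring
    rw [hsplit, hB, ← hA]
    have hG0 : GG T ↑j n 0 = 0 := by
      simp only [GG]; exact intervalIntegral.integral_same
    rw [hG0]
    ring
  -- Step 4 : limits of the sums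
  have hlim : ∀ (j : ↥s), ∀ r ∈ Icc (0:ℝ) 1,
      Tendsto (fun h : ℝ => ∑ k ∈ s.attach, cc T n ↑k h * GG T ↑j ↑k r) (𝓝[>] 0)
        (𝓝 (gg T ↑j n r - gg T ↑j n 0)) := by
    intro j r hr
    have t1 : Tendsto (fun h : ℝ => h⁻¹ * (GG T ↑j n (r + h) - GG T ↑j n r)) (𝓝[>] 0)
        (𝓝 (gg T ↑j n r)) := slope_integral_right _ (ggcont j n) r
    have t2 : Tendsto (fun h : ℝ => h⁻¹ * (GG T ↑j n h - GG T ↑j n 0)) (𝓝[>] 0)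
        (𝓝 (gg T ↑j n 0)) := by
      have t2' := slope_integral_right _ (ggcont j n) 0
      refine t2'.congr fun h => ?_
      simp only [GG, zero_add, intervalIntegral.integral_same, sub_zero]
    refine (t1.sub t2).congr' ?_
    filter_upwards [Ioc_mem_nhdsGT_of_mem (Set.left_mem_Ico.mpr one_pos)] with h hh
    exact (hkey j r hr h hh).symm
  -- Step 5 : matrix of averaged integrals converges to the identity
  have hMat : ∀ k j : ↥s, Tendsto (fun r : ℝ => r⁻¹ * GG T ↑j ↑k r) (𝓝[>] 0)
      (𝓝 (if k = j then (1:ℝ) else 0)) := by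
    intro k j
    have t0 : Tendsto (fun r : ℝ => r⁻¹ * GG T ↑j ↑k r) (𝓝[>] 0) (𝓝 (gg T ↑j ↑k 0)) :=
      avg_integral_tendsto _ (ggcont j ↑k)
    have hval : gg T ↑j ↑k 0 = if k = j then (1:ℝ) else 0 := by
      have hg0 : gg T ↑j ↑k 0 = ee (↑j : ℕ) ↑k := by
        simp only [gg, max_self, hT0, ContinuousLinearMap.coe_id', id_eq]
      rw [hg0, ee_apply]
      by_cases hkj : k = j
      · simp [hkj]
      · have h2 : (↑k : ℕ) ≠ ↑j := fun e => hkj (Subtype.ext e)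
        simp [hkj, h2]
    rwa [hval] at t0
  have hMat' : Tendsto (fun r : ℝ => Matrix.of fun k j : ↥s => r⁻¹ * GG T ↑j ↑k r) (𝓝[>] 0)
      (𝓝 (1 : Matrix ↥s ↥s ℝ)) := by
    apply tendsto_pi_nhds.mpr
    intro k
    apply tendsto_pi_nhds.mpr
    intro j
    simpa [Matrix.one_apply] using hMat k j
  have hdet : Tendsto (fun r : ℝ => (Matrix.of fun k j : ↥s => r⁻¹ * GG T ↑j ↑k r).det)
      (𝓝[>] 0) (𝓝 (1:ℝ)) := by
    have hcont : Continuous fun A : Matrix ↥s ↥s ℝ => A.det := Continuous.matrix_det continuous_id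
    have hcomp := (hcont.tendsto (1 : Matrix ↥s ↥s ℝ)).comp hMat'
    simpa [Matrix.det_one, Function.comp_def] using hcomp
  have hev2 : ∀ᶠ r in 𝓝[>] (0:ℝ), r ∈ Ioc (0:ℝ) 1 :=
    Ioc_mem_nhdsGT_of_mem (Set.left_mem_Ico.mpr one_pos)
  obtain ⟨r₀, hr₀det, hr₀⟩ := ((hdet.eventually_ne one_ne_zero).and hev2).exists
  set A : Matrix ↥s ↥s ℝ := Matrix.of fun k j : ↥s => r₀⁻¹ * GG T ↑j ↑k r₀ with hAdef
  have hAu : IsUnit A.det := isUnit_iff_ne_zero.mpr hr₀det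
  have hAB : A * A⁻¹ = 1 := Matrix.mul_nonsing_inv A hAu
  have hd : ∀ j : ↥s, Tendsto (fun h : ℝ => ∑ k ∈ s.attach, cc T n ↑k h * A k j) (𝓝[>] 0)
      (𝓝 (r₀⁻¹ * (gg T ↑j n r₀ - gg T ↑j n 0))) := by
    intro j
    have base := (hlim j r₀ ⟨hr₀.1.le, hr₀.2⟩).const_mul r₀⁻¹
    refine base.congr fun h => ?_
    rw [Finset.mul_sum]
    refine Finset.sum_congr rfl fun k _ => ?_
    simp only [hAdef, Matrix.of_apply]
    ring
  have hc : ∀ k₀ : ↥s, Tendsto (fun h : ℝ => cc T n ↑k₀ h) (𝓝[>] 0)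
      (𝓝 (∑ j ∈ s.attach, (r₀⁻¹ * (gg T ↑j n r₀ - gg T ↑j n 0)) * A⁻¹ j k₀)) := by
    intro k₀
    have tsum := tendsto_finset_sum s.attach (fun j _ => (hd j).mul_const (A⁻¹ j k₀))
    refine tsum.congr fun h => ?_
    calc ∑ j ∈ s.attach, (∑ k ∈ s.attach, cc T n ↑k h * A k j) * A⁻¹ j k₀
        = ∑ j ∈ s.attach, ∑ k ∈ s.attach, cc T n ↑k h * A k j * A⁻¹ j k₀ :=
          Finset.sum_congr rfl fun j _ => Finset.sum_mul _ _ _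
      _ = ∑ k ∈ s.attach, ∑ j ∈ s.attach, cc T n ↑k h * A k j * A⁻¹ j k₀ := Finset.sum_comm
      _ = ∑ k ∈ s.attach, cc T n ↑k h * (A * A⁻¹) k k₀ := by
          refine Finset.sum_congr rfl fun k _ => ?_
          rw [Matrix.mul_apply, Finset.mul_sum, Finset.univ_eq_attach]
          exact Finset.sum_congr rfl fun j _ => by ring
      _ = cc T n ↑k₀ h := by
          rw [hAB]
          rw [Finset.sum_eq_single k₀]
          · simp [Matrix.one_apply]
          · intro b _ hb; simp [Matrix.one_apply, hb]
          · intro hmem; exact absurd (Finset.mem_attach _ _) hmem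
  -- Step 6 : conclusion
  refine ⟨∑ k ∈ s.attach,
    x ↑k * (∑ j ∈ s.attach, (r₀⁻¹ * (gg T ↑j n r₀ - gg T ↑j n 0)) * A⁻¹ j k), ?_⟩
  have tfin := tendsto_finset_sum s.attach (fun k (_ : k ∈ s.attach) => (hc k).const_mul (x ↑k))
  refine tfin.congr' ?_
  filter_upwards [Ioc_mem_nhdsGT_of_mem (Set.left_mem_Ico.mpr one_pos)] with h hh
  have e1 : (∑ k ∈ s.attach, x ↑k * T h (ee (↑k : ℕ)) n) = T h x n :=
    (hrep h ⟨hh.1.le, hh.2⟩ x).symm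
  have e2 : (∑ k ∈ s.attach, x ↑k * ee (↑k : ℕ) n) = x n := by
    rw [Finset.sum_eq_single (⟨n, hns⟩ : ↥s)]
    · simp [ee_same]
    · intro b _ hb
      have hne : n ≠ (b:ℕ) := fun e => hb (Subtype.ext e.symm)
      simp [ee_apply, hne]
    · intro hmem; exact absurd (Finset.mem_attach _ _) hmem
  calc ∑ k ∈ s.attach, x ↑k * cc T n ↑k h
      = h⁻¹ * ((∑ k ∈ s.attach, x ↑k * T h (ee (↑k : ℕ)) n)
          - ∑ k ∈ s.attach, x ↑k * ee (↑k : ℕ) n) := by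
        rw [← Finset.sum_sub_distrib, Finset.mul_sum]
        exact Finset.sum_congr rfl fun k _ => by simp only [cc]; ring
    _ = h⁻¹ * (T h x n - x n) := by rw [e1, e2]

/-- Every strongly continuous semigroup on `ω = ℝ^ℕ` (product
topology) has everywhere defined generator: for every `x` the limit
`lim_{h→0⁺} h⁻¹ • (T_h x − x)` exists. -/
theorem stmt2
    (T : ℝ → (ℕ → ℝ) →L[ℝ] (ℕ → ℝ))
    (hT0 : T 0 = ContinuousLinearMap.id ℝ (ℕ → ℝ))
    (hTadd : ∀ s t : ℝ, 0 ≤ s → 0 ≤ t → T (s + t) = (T s).comp (T t))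
    (horbit : ∀ x : ℕ → ℝ, ContinuousOn (fun t : ℝ => T t x) (Set.Ici 0)) :
    ∀ x : ℕ → ℝ, ∃ y : ℕ → ℝ,
      Tendsto (fun h : ℝ => h⁻¹ • (T h x - x)) (𝓝[>] 0) (𝓝 y) := by
  intro x
  have H := fun n => coord T hT0 hTadd horbit x n
  choose y hy using H
  refine ⟨y, tendsto_pi_nhds.mpr fun n => ?_⟩
  refine (hy n).congr fun h => ?_
  simp
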